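/- Let λ > 0, let x_1, …, x_N ∈ ℝ^D, let c_1, …, c_N ≥ 0, and set H = Σ_{m=1}^N c_m x_m x_mᵀ + λ I_D (positive definite). Then for every n with x_n ≠ 0, the quadratic form Q_n = x_nᵀ H⁻¹ x_n satisfies 0 < Q_n ≤ ‖x_n‖₂² / (λ + c_n ‖x_n‖₂²). -/

import Mathlib

open Matrix BigOperators RealInnerProductSpace

lemma aux_vmv_qf {D : ℕ} (v y : Fin D → ℝ) :
    y ⬝ᵥ (Matrix.vecMulVec v v *ᵥ y) = (v ⬝ᵥ y) ^ 2 := by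
  simp only [dotProduct, Matrix.mulVec, Matrix.vecMulVec_apply, dotProduct]
  rw [sq, Finset.sum_mul]
  congr 1; ext i
  rw [Finset.mul_sum, Finset.mul_sum]
  congr 1; ext j
  ring

lemma aux_qf {N D : ℕ} (lam : ℝ) (x : Fin N → Fin D → ℝ) (c : Fin N → ℝ)
    (H : Matrix (Fin D) (Fin D) ℝ)
    (hH : H = ∑ m, c m • Matrix.vecMulVec (x m) (x m) + lam • 1) (y : Fin D → ℝ) :
    y ⬝ᵥ (H *ᵥ y) = ∑ m, c m * (x m ⬝ᵥ y) ^ 2 + lam * (y ⬝ᵥ y) := by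
  subst hH
  rw [Matrix.add_mulVec, dotProduct_add]
  congr 1
  · have hsm : (∑ m, c m • Matrix.vecMulVec (x m) (x m)) *ᵥ y
        = ∑ m, (c m • Matrix.vecMulVec (x m) (x m)) *ᵥ y := by
      ext i
      simp only [Matrix.mulVec, dotProduct, Matrix.sum_apply, Finset.sum_mul,
        Finset.sum_apply]
      rw [Finset.sum_comm]
    rw [hsm]
    have hds : y ⬝ᵥ (∑ m, (c m • Matrix.vecMulVec (x m) (x m)) *ᵥ y)
        = ∑ m, y ⬝ᵥ ((c m • Matrix.vecMulVec (x m) (x m)) *ᵥ y) := by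
      simp only [dotProduct, Finset.sum_apply, Finset.mul_sum]
      rw [Finset.sum_comm]
    rw [hds]
    congr 1; ext m
    rw [Matrix.smul_mulVec, dotProduct_smul, aux_vmv_qf, smul_eq_mul]
  · rw [Matrix.smul_mulVec, dotProduct_smul, Matrix.one_mulVec, smul_eq_mul]

theorem stmt_14
    (N D : ℕ) (lam : ℝ) (hlam : 0 < lam)
    (x : Fin N → Fin D → ℝ) (c : Fin N → ℝ) (hc : ∀ n, 0 ≤ c n)
    (H : Matrix (Fin D) (Fin D) ℝ)
    (hH : H = ∑ m, c m • Matrix.vecMulVec (x m) (x m) + lam • 1) :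
    ∀ n : Fin N, x n ≠ 0 →
      0 < x n ⬝ᵥ (H⁻¹ *ᵥ x n) ∧
      x n ⬝ᵥ (H⁻¹ *ᵥ x n) ≤ (x n ⬝ᵥ x n) / (lam + c n * (x n ⬝ᵥ x n)) := by
  have hsym : H.IsHermitian := by
    rw [hH]
    ext i j
    simp only [Matrix.conjTranspose_apply, Matrix.add_apply, Matrix.sum_apply,
      Matrix.smul_apply, Matrix.vecMulVec_apply, Matrix.one_apply, smul_eq_mul,
      star_trivial]
    congr 1
    · exact Finset.sum_congr rfl fun m _ => by ring
    · by_cases h : i = j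
      · simp [h]
      · rw [if_neg h, if_neg fun hji => h hji.symm]
  have hPD : H.PosDef := by
    refine Matrix.PosDef.of_dotProduct_mulVec_pos hsym fun v hv => ?_
    rw [star_trivial, aux_qf lam x c H hH v]
    refine add_pos_of_nonneg_of_pos
      (Finset.sum_nonneg fun m _ => mul_nonneg (hc m) (sq_nonneg _)) (mul_pos hlam ?_)
    rw [← star_trivial v]
    exact dotProduct_star_self_pos_iff.mpr hv
  intro n hxn
  set y := H⁻¹ *ᵥ x n with hy
  have h1 : 0 < x n ⬝ᵥ y := by
    have := hPD.inv.dotProduct_mulVec_pos hxn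
    rwa [star_trivial] at this
  have hs : 0 < x n ⬝ᵥ x n := by
    rw [← star_trivial (x n)]
    exact dotProduct_star_self_pos_iff.mpr hxn
  refine ⟨h1, ?_⟩
  have hxy : H *ᵥ y = x n := by
    rw [hy, Matrix.mulVec_mulVec, Matrix.mul_nonsing_inv H hPD.det_pos.ne'.isUnit,
      Matrix.one_mulVec]
  have hQ : x n ⬝ᵥ y = ∑ m, c m * (x m ⬝ᵥ y) ^ 2 + lam * (y ⬝ᵥ y) := by
    conv_lhs => rw [← hxy]
    rw [dotProduct_comm]
    exact aux_qf lam x c H hH y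
  have hkey : c n * (x n ⬝ᵥ y) ^ 2 + lam * (y ⬝ᵥ y) ≤ x n ⬝ᵥ y := by
    have hsum : c n * (x n ⬝ᵥ y) ^ 2 ≤ ∑ m, c m * (x m ⬝ᵥ y) ^ 2 :=
      Finset.single_le_sum (f := fun m => c m * (x m ⬝ᵥ y) ^ 2)
        (fun m _ => mul_nonneg (hc m) (sq_nonneg _)) (Finset.mem_univ n)
    linarith [hQ.ge]
  have hCS : (x n ⬝ᵥ y) ^ 2 ≤ (x n ⬝ᵥ x n) * (y ⬝ᵥ y) := by
    have := Finset.sum_mul_sq_le_sq_mul_sq Finset.univ (x n) y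
    simpa [dotProduct, sq, Finset.mul_sum, Finset.sum_mul, mul_assoc, mul_comm,
      mul_left_comm] using this
  have hden : 0 < lam + c n * (x n ⬝ᵥ x n) :=
    add_pos_of_pos_of_nonneg hlam (mul_nonneg (hc n) hs.le)
  rw [le_div_iff₀ hden]
  nlinarith [mul_le_mul_of_nonneg_right hkey hs.le, hCS, h1, hs, hlam, hc n,
    mul_pos h1 hs, sq_nonneg (x n ⬝ᵥ y)]
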